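/- If G is a connected edge-critical triangle-free graph and v is a vertex of degree at least 2, then the set N_2(v) of vertices at distance exactly two from v destabilises G_v, i.e., every maximum independent set of G_v contains a vertex of N_2(v). -/

import Mathlib

open SimpleGraph

/-- The independence number of a graph. -/
noncomputable def indepNum {V : Type} (G : SimpleGraph V) : ℕ :=
  sSup {n : ℕ | ∃ s : Set V, s.Finite ∧ s.ncard = n ∧ ∀ a ∈ s, ∀ b ∈ s, ¬ G.Adj a b}

/-- The number of edges of a graph. -/
noncomputable def numEdges {V : Type} (G : SimpleGraph V) : ℕ := G.edgeSet.ncard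

/-- The degree (valency) of a vertex. -/
noncomputable def deg {V : Type} (G : SimpleGraph V) (v : V) : ℕ := (G.neighborSet v).ncard

/-- The second valency `d²(v) = ∑_{w ∈ N(v)} d(w)`. -/
noncomputable def secondDeg {V : Type} (G : SimpleGraph V) (v : V) : ℕ :=
  ∑ᶠ w ∈ G.neighborSet v, deg G w

/-- `p = (a,b,c,d)` is an (ordered) 4-cycle of `G`. -/
def IsC4 {V : Type} (G : SimpleGraph V) (p : V × V × V × V) : Prop :=
  G.Adj p.1 p.2.1 ∧ G.Adj p.2.1 p.2.2.1 ∧ G.Adj p.2.2.1 p.2.2.2 ∧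
    G.Adj p.2.2.2 p.1 ∧ p.1 ≠ p.2.2.1 ∧ p.2.1 ≠ p.2.2.2

/-- The number of 4-cycles of `G`; each 4-cycle yields 8 ordered tuples. -/
noncomputable def numC4 {V : Type} (G : SimpleGraph V) : ℕ :=
  {p : V × V × V × V | IsC4 G p}.ncard / 8

/-- The number of 4-cycles of `G` containing a vertex of `S`. -/
noncomputable def numC4Through {V : Type} (G : SimpleGraph V) (S : Set V) : ℕ :=
  {p : V × V × V × V | IsC4 G p ∧ (p.1 ∈ S ∨ p.2.1 ∈ S ∨ p.2.2.1 ∈ S ∨ p.2.2.2 ∈ S)}.ncard / 8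

/-- The invariant `ν(G) = 3e(G) − 17n(G) + 35α(G) + N(C₄;G)`. -/
noncomputable def nu {V : Type} (G : SimpleGraph V) : ℤ :=
  3 * (numEdges G : ℤ) - 17 * (Nat.card V : ℤ) + 35 * (_root_.indepNum G : ℤ) + (numC4 G : ℤ)

/-- The closed neighbourhood `N[v]`. -/
def closedNbhd {V : Type} (G : SimpleGraph V) (v : V) : Set V := insert v (G.neighborSet v)

/-- `S` destabilises `G` : removing `S` decreases the independence number. -/
def Destab {V : Type} (G : SimpleGraph V) (S : Set V) : Prop :=
  _root_.indepNum (G.induce Sᶜ) < _root_.indepNum G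

/-- `G` is edge-critical (α-critical): removing any edge increases the independence number. -/
def EdgeCritical {V : Type} (G : SimpleGraph V) : Prop :=
  ∀ e ∈ G.edgeSet, _root_.indepNum G < _root_.indepNum (G.deleteEdges {e})

lemma indep_bddAbove {V : Type} [Finite V] (G : SimpleGraph V) :
    BddAbove {n : ℕ | ∃ s : Set V, s.Finite ∧ s.ncard = n ∧ ∀ a ∈ s, ∀ b ∈ s, ¬ G.Adj a b} := by
  refine ⟨Nat.card V, fun n hn => ?_⟩
  obtain ⟨t, _, ht, _⟩ := hn
  calc n = t.ncard := ht.symm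
    _ ≤ (Set.univ : Set V).ncard := Set.ncard_le_ncard (Set.subset_univ t) Set.finite_univ
    _ = Nat.card V := Set.ncard_univ V

lemma le_indepNum {V : Type} [Finite V] (G : SimpleGraph V) (s : Set V)
    (hs : ∀ a ∈ s, ∀ b ∈ s, ¬ G.Adj a b) : s.ncard ≤ _root_.indepNum G :=
  le_csSup (indep_bddAbove G) ⟨s, s.toFinite, rfl, hs⟩

lemma exists_max_indep {V : Type} [Finite V] (G : SimpleGraph V) :
    ∃ s : Set V, (∀ a ∈ s, ∀ b ∈ s, ¬ G.Adj a b) ∧ s.ncard = _root_.indepNum G := by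
  have h := Nat.sSup_mem (s := {n : ℕ | ∃ s : Set V, s.Finite ∧ s.ncard = n ∧
      ∀ a ∈ s, ∀ b ∈ s, ¬ G.Adj a b}) ⟨0, ∅, Set.finite_empty, by simp, by simp⟩
    (indep_bddAbove G)
  obtain ⟨s, _, hcard, hind⟩ := h
  exact ⟨s, hind, hcard⟩

/-- If `G` is a connected edge-critical triangle-free graph and `deg v ≥ 2`,
then the set of vertices at distance exactly two from `v` destabilises `G_v`. -/
theorem stmt2 {V : Type} [Fintype V] (G : SimpleGraph V) (hconn : G.Connected)
    (hec : EdgeCritical G) (h3 : G.CliqueFree 3) (v : V) (hd : 2 ≤ deg G v) :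
    Destab (G.induce (closedNbhd G v)ᶜ) {u | G.dist v ↑u = 2} := by
  classical
  set n := _root_.indepNum G with hn
  obtain ⟨u₁, hu₁, u₂, hu₂, hne⟩ := (Set.one_lt_ncard (G.neighborSet v).toFinite).mp hd
  have ha1 : G.Adj v u₁ := hu₁
  have ha2 : G.Adj v u₂ := hu₂
  have hn12 : ¬ G.Adj u₁ u₂ := fun h => h3 {v, u₁, u₂} (is3Clique_triple_iff.mpr ⟨ha1, ha2, h⟩)
  have h2le : 2 ≤ n := by
    have hpair : ∀ a ∈ ({u₁, u₂} : Set V), ∀ b ∈ ({u₁, u₂} : Set V), ¬ G.Adj a b := by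
      intro a ha b hb h
      simp only [Set.mem_insert_iff, Set.mem_singleton_iff] at ha hb
      rcases ha with ha | ha <;> rcases hb with hb | hb <;> rw [ha, hb] at h
      · exact G.irrefl h
      · exact hn12 h
      · exact hn12 h.symm
      · exact G.irrefl h
    have := le_indepNum G {u₁, u₂} hpair
    rwa [Set.ncard_pair hne] at this
  -- Step B: a large independent set of G avoiding N[v]
  obtain ⟨J, hJind, hJcard⟩ := exists_max_indep (G.deleteEdges {s(v, u₁)})
  have hlt : n < J.ncard := by rw [hJcard]; exact hec s(v, u₁) ha1
  have hmem : v ∈ J ∧ u₁ ∈ J := by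
    by_contra hc
    have hind : ∀ a ∈ J, ∀ b ∈ J, ¬ G.Adj a b := by
      intro a ha b hb hab
      by_cases he : s(a, b) = s(v, u₁)
      · rw [Sym2.eq_iff] at he
        rcases he with ⟨rfl, rfl⟩ | ⟨rfl, rfl⟩
        · exact hc ⟨ha, hb⟩
        · exact hc ⟨hb, ha⟩
      · exact hJind a ha b hb (by rw [SimpleGraph.deleteEdges_adj]; exact ⟨hab, by simpa using he⟩)
    have := le_indepNum G J hind
    omega
  obtain ⟨hvJ, hu₁J⟩ := hmem
  set I : Set V := J \ {u₁} with hI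
  have hIind : ∀ a ∈ I, ∀ b ∈ I, ¬ G.Adj a b := by
    intro a ha b hb hab
    by_cases he : s(a, b) = s(v, u₁)
    · rw [Sym2.eq_iff] at he
      rcases he with ⟨rfl, rfl⟩ | ⟨rfl, rfl⟩
      · exact hb.2 rfl
      · exact ha.2 rfl
    · exact hJind a ha.1 b hb.1 (by rw [SimpleGraph.deleteEdges_adj]; exact ⟨hab, by simpa using he⟩)
  have hvI : v ∈ I := ⟨hvJ, fun h => ha1.ne h⟩
  have hIcard : n ≤ I.ncard := by
    rw [hI, Set.ncard_diff_singleton_of_mem hu₁J]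
    omega
  have hI₀sub : I \ {v} ⊆ (closedNbhd G v)ᶜ := by
    rintro x ⟨hxI, hxv⟩ hx
    rcases Set.mem_insert_iff.mp hx with rfl | hx
    · exact hxv rfl
    · exact hIind v hvI x hxI hx
  have hstep1 : n - 1 ≤ _root_.indepNum (G.induce (closedNbhd G v)ᶜ) := by
    set s₁ : Set ↥(closedNbhd G v)ᶜ := Subtype.val ⁻¹' (I \ {v}) with hs₁
    have himg : Subtype.val '' s₁ = I \ {v} := by
      rw [hs₁, Subtype.image_preimage_coe]
      exact Set.inter_eq_right.mpr hI₀sub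
    have hcard : s₁.ncard = (I \ {v}).ncard := by
      rw [← himg, Set.ncard_image_of_injective _ Subtype.val_injective]
    have hind : ∀ a ∈ s₁, ∀ b ∈ s₁, ¬ (G.induce (closedNbhd G v)ᶜ).Adj a b := by
      intro a ha b hb hab
      exact hIind a ha.1 b hb.1 hab
    have := le_indepNum _ s₁ hind
    rw [hcard, Set.ncard_diff_singleton_of_mem hvI] at this
    omega
  have hstep2 : _root_.indepNum ((G.induce (closedNbhd G v)ᶜ).induce
      {u : ↥(closedNbhd G v)ᶜ | G.dist v ↑u = 2}ᶜ) ≤ n - 2 := by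
    obtain ⟨K, hKind, hKcard⟩ := exists_max_indep ((G.induce (closedNbhd G v)ᶜ).induce
      {u : ↥(closedNbhd G v)ᶜ | G.dist v ↑u = 2}ᶜ)
    set A : Set V := Subtype.val '' (Subtype.val '' K) with hA
    have hAcard : A.ncard = K.ncard := by
      rw [hA, Set.ncard_image_of_injective _ Subtype.val_injective,
          Set.ncard_image_of_injective _ Subtype.val_injective]
    have hAind : ∀ a ∈ A, ∀ b ∈ A, ¬ G.Adj a b := by
      rintro _ ⟨_, ⟨a, ha, rfl⟩, rfl⟩ _ ⟨_, ⟨b, hb, rfl⟩, rfl⟩ hab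
      exact hKind a ha b hb hab
    have hAprop : ∀ a ∈ A, a ∉ closedNbhd G v ∧ G.dist v a ≠ 2 := by
      rintro _ ⟨_, ⟨a, _, rfl⟩, rfl⟩
      exact ⟨(a : ↥(closedNbhd G v)ᶜ).2, a.2⟩
    have key : ∀ u, G.Adj v u → ∀ a ∈ A, ¬ G.Adj u a := by
      intro u hu a ha hua
      obtain ⟨hnc, hd2⟩ := hAprop a ha
      apply hd2
      have hle : G.dist v a ≤ 2 := by
        have := SimpleGraph.dist_le (Walk.cons hu (Walk.cons hua Walk.nil))
        simpa using this
      have h0 : G.dist v a ≠ 0 := by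
        intro h
        rw [hconn.dist_eq_zero_iff] at h
        subst h
        exact hnc (Set.mem_insert _ _)
      have h1 : G.dist v a ≠ 1 := by
        intro h
        rw [dist_eq_one_iff_adj] at h
        exact hnc (Set.mem_insert_of_mem _ h)
      omega
    have hB : ∀ a ∈ insert u₁ (insert u₂ A), ∀ b ∈ insert u₁ (insert u₂ A), ¬ G.Adj a b := by
      intro a ha b hb hab
      simp only [Set.mem_insert_iff] at ha hb
      rcases ha with ha | ha | ha <;> rcases hb with hb | hb | hb
      · rw [ha, hb] at hab; exact G.irrefl hab
      · rw [ha, hb] at hab; exact hn12 hab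
      · rw [ha] at hab; exact key u₁ ha1 b hb hab
      · rw [ha, hb] at hab; exact hn12 hab.symm
      · rw [ha, hb] at hab; exact G.irrefl hab
      · rw [ha] at hab; exact key u₂ ha2 b hb hab
      · rw [hb] at hab; exact key u₁ ha1 a ha hab.symm
      · rw [hb] at hab; exact key u₂ ha2 a ha hab.symm
      · exact hAind a ha b hb hab
    have hu2A : u₂ ∉ A := fun h => (hAprop u₂ h).1 (Set.mem_insert_of_mem _ hu₂)
    have hu1A : u₁ ∉ insert u₂ A := by
      intro h
      rcases Set.mem_insert_iff.mp h with rfl | h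
      · exact hne rfl
      · exact (hAprop u₁ h).1 (Set.mem_insert_of_mem _ hu₁)
    have hcardB : (insert u₁ (insert u₂ A)).ncard = A.ncard + 2 := by
      rw [Set.ncard_insert_of_notMem hu1A, Set.ncard_insert_of_notMem hu2A]
    have hle := le_indepNum G _ hB
    omega
  show _root_.indepNum _ < _root_.indepNum _
  omega
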